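/- Let P and Q be finite-dimensional posets with abs(P) ≥ dim(Q). Then dim(P × Q) = dim(P), and abs(P × Q) ≥ abs(P) − dim(Q) + abs(Q). -/

import Mathlib

universe u

/-- The order dimension of a poset: the least cardinal `κ` such that the partial
order is the intersection of `κ` linear orderings (each extending it). -/
noncomputable def orderDim (α : Type u) [PartialOrder α] : Cardinal.{u} :=
  sInf {κ : Cardinal.{u} | ∃ (ι : Type u) (r : ι → α → α → Prop),
    (∀ i, IsLinearOrder α (r i)) ∧
    (∀ x y : α, x ≤ y ↔ ∀ i, r i x y) ∧
    Cardinal.mk ι = κ}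

/-- The absorbency of a (finite-dimensional) poset `P`: the largest natural
number `n` such that taking the product of `P` with any `n`-tuple of (nonempty)
chains does not change the dimension. -/
noncomputable def absorb (P : Type u) [PartialOrder P] : ℕ :=
  sSup {n : ℕ | ∀ (T : Fin n → Type u) [∀ i, LinearOrder (T i)] [∀ i, Nonempty (T i)],
    orderDim (P × ∀ i, T i) = orderDim P}

/-- The bounded dimension of a (finite-dimensional) poset `P`: the greatest
natural number `n` such that some bounded subposet of `P` (equivalently, some
nonempty interval `[p, p']`) has dimension `n`. -/
noncomputable def bdDim (P : Type u) [PartialOrder P] : ℕ :=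
  sSup {n : ℕ | ∃ p p' : P, p ≤ p' ∧ orderDim ↥(Set.Icc p p') = n}

/-! ### Auxiliary material -/

open Cardinal

/-- A family of linear orders realizing the partial order of `α`. -/
def IsRealizer (α : Type u) [PartialOrder α] {ι : Type*} (r : ι → α → α → Prop) : Prop :=
  (∀ i, IsLinearOrder α (r i)) ∧ ∀ x y : α, x ≤ y ↔ ∀ i, r i x y

/-- The set of natural numbers witnessing the absorbency of `P`. -/
def AbsSet (P : Type u) [PartialOrder P] : Set ℕ :=
  {n : ℕ | ∀ (T : Fin n → Type u) [∀ i, LinearOrder (T i)] [∀ i, Nonempty (T i)],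
    orderDim (P × ∀ i, T i) = orderDim P}

lemma absorb_eq (P : Type u) [PartialOrder P] : absorb P = sSup (AbsSet P) := rfl

/-- Szpilrajn: every partial order has a realizer. -/
lemma exists_realizer (α : Type u) [PartialOrder α] :
    ∃ (ι : Type u) (r : ι → α → α → Prop), IsRealizer α r := by
  refine ⟨{s : α → α → Prop // IsLinearOrder α s ∧ ∀ a b : α, a ≤ b → s a b},
    fun i => i.1, fun i => i.2.1, fun x y => ⟨fun h i => i.2.2 _ _ h, fun h => ?_⟩⟩
  by_contra hxy
  let r' : α → α → Prop := fun a b => a ≤ b ∨ (a ≤ y ∧ x ≤ b)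
  haveI : IsPartialOrder α r' := by
    refine { refl := fun a => Or.inl le_rfl, trans := ?_, antisymm := ?_ }
    · rintro a b c (hab | ⟨hay, hxb⟩) (hbc | ⟨hby, hxc⟩)
      · exact Or.inl (hab.trans hbc)
      · exact Or.inr ⟨hab.trans hby, hxc⟩
      · exact Or.inr ⟨hay, hxb.trans hbc⟩
      · exact Or.inr ⟨hay, hxc⟩
    · rintro a b (hab | ⟨hay, hxb⟩) (hba | ⟨hby, hxa⟩)
      · exact le_antisymm hab hba
      · exact absurd ((hxa.trans hab).trans hby) hxy
      · exact absurd ((hxb.trans hba).trans hay) hxy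
      · exact absurd (hxa.trans hay) hxy
  obtain ⟨s, slin, hs⟩ := extend_partialOrder r'
  have hle : ∀ a b : α, a ≤ b → s a b := fun a b hab => hs _ _ (Or.inl hab)
  have hsyx : s y x := hs _ _ (Or.inr ⟨le_rfl, le_rfl⟩)
  have hsxy : s x y := h ⟨s, slin, hle⟩
  exact hxy (le_of_eq (slin.antisymm _ _ hsxy hsyx))

lemma nonempty_dimSet (α : Type u) [PartialOrder α] :
    {κ : Cardinal.{u} | ∃ (ι : Type u) (r : ι → α → α → Prop),
      (∀ i, IsLinearOrder α (r i)) ∧ (∀ x y : α, x ≤ y ↔ ∀ i, r i x y) ∧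
      Cardinal.mk ι = κ}.Nonempty := by
  obtain ⟨ι, r, h1, h2⟩ := exists_realizer α
  exact ⟨Cardinal.mk ι, ι, r, h1, h2, rfl⟩

lemma exists_realizer_orderDim (α : Type u) [PartialOrder α] :
    ∃ (ι : Type u) (r : ι → α → α → Prop), IsRealizer α r ∧ Cardinal.mk ι = orderDim α := by
  have := csInf_mem (nonempty_dimSet α)
  obtain ⟨ι, r, h1, h2, h3⟩ := this
  exact ⟨ι, r, ⟨h1, h2⟩, h3⟩

lemma orderDim_le_mk {α : Type u} [PartialOrder α] {ι : Type u} {r : ι → α → α → Prop}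
    (h : IsRealizer α r) : orderDim α ≤ Cardinal.mk ι :=
  csInf_le' ⟨ι, r, h.1, h.2, rfl⟩

lemma IsRealizer.comap {α β : Type u} [PartialOrder α] [PartialOrder β]
    {ι : Type u} {r : ι → β → β → Prop} (h : IsRealizer β r)
    (f : α ↪o β) : IsRealizer α (fun i a b => r i (f a) (f b)) := by
  constructor
  · intro i
    haveI := h.1 i
    exact { refl := fun a => Std.Refl.refl (r := r i) _,
            trans := fun a b c hab hbc => IsTrans.trans (r := r i) _ _ _ hab hbc,
            antisymm := fun a b hab hba =>
              f.injective (Std.Antisymm.antisymm (r := r i) _ _ hab hba),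
            total := fun a b => Std.Total.total (r := r i) _ _ }
  · intro x y
    rw [← f.le_iff_le]
    exact h.2 (f x) (f y)

lemma orderDim_le_of_embedding {α β : Type u} [PartialOrder α] [PartialOrder β]
    (f : α ↪o β) : orderDim α ≤ orderDim β := by
  obtain ⟨ι, r, hr, hc⟩ := exists_realizer_orderDim β
  exact hc ▸ orderDim_le_mk (hr.comap f)

lemma orderDim_eq_of_iso {α β : Type u} [PartialOrder α] [PartialOrder β]
    (e : α ≃o β) : orderDim α = orderDim β :=
  le_antisymm (orderDim_le_of_embedding e.toOrderEmbedding)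
    (orderDim_le_of_embedding e.symm.toOrderEmbedding)

noncomputable def linOfIsLin {α : Type u} (r : α → α → Prop) (h : IsLinearOrder α r) :
    LinearOrder α := by
  classical
  letI : IsLinearOrder α r := h
  exact { le := r,
          le_refl := fun a => Std.Refl.refl (r := r) a,
          le_trans := fun a b c => IsTrans.trans (r := r) a b c,
          le_antisymm := fun a b => Std.Antisymm.antisymm (r := r) a b,
          le_total := fun a b => Std.Total.total (r := r) a b,
          toDecidableLE := fun a b => Classical.dec _ }

section isos
variable {α β γ δ : Type*}

def orderIsoPiCongrLeft' {ι κ : Type*} (W : ι → Type*) [∀ i, Preorder (W i)] (e : ι ≃ κ) :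
    (∀ i, W i) ≃o (∀ k, W (e.symm k)) where
  toEquiv := Equiv.piCongrLeft' W e
  map_rel_iff' := by
    intro f g
    constructor
    · intro h i
      obtain ⟨k, rfl⟩ := e.symm.surjective i
      exact h k
    · intro h k
      exact h _

def orderIsoSumPi {ι κ : Type*} (W : ι ⊕ κ → Type*) [∀ s, Preorder (W s)] :
    (∀ s, W s) ≃o (∀ i, W (.inl i)) × (∀ k, W (.inr k)) where
  toEquiv := Equiv.sumPiEquivProdPi W
  map_rel_iff' := by
    intro f g
    constructor
    · rintro ⟨h1, h2⟩ (i | k)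
      exacts [h1 i, h2 k]
    · intro h
      exact ⟨fun i => h _, fun k => h _⟩

def orderIsoProdUnique (α β : Type*) [Preorder α] [Preorder β] [Unique β] : α × β ≃o α where
  toFun := Prod.fst
  invFun a := (a, default)
  left_inv p := by
    obtain ⟨a, b⟩ := p
    simp [Subsingleton.elim (default : β) b]
  right_inv a := rfl
  map_rel_iff' := by
    intro p q
    constructor
    · intro h
      exact ⟨h, (Subsingleton.elim p.2 q.2).le⟩
    · intro h
      exact h.1

def orderIsoProdCongr [Preorder α] [Preorder β] [Preorder γ] [Preorder δ]
    (e1 : α ≃o β) (e2 : γ ≃o δ) : α × γ ≃o β × δ where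
  toEquiv := Equiv.prodCongr e1.toEquiv e2.toEquiv
  map_rel_iff' := by
    intro p q
    simp [Equiv.prodCongr, Prod.le_def, e1.le_iff_le, e2.le_iff_le]

def orderIsoPPPC (α β γ δ : Type*) [Preorder α] [Preorder β] [Preorder γ] [Preorder δ] :
    (α × β) × γ × δ ≃o (α × γ) × β × δ where
  toEquiv := Equiv.prodProdProdComm α β γ δ
  map_rel_iff' := by
    intro p q
    simp only [Equiv.prodProdProdComm, Equiv.coe_fn_mk, Prod.le_def]
    tauto

end isos

/-! ### Padding families of chains -/

def padFam {m k : ℕ} (C : Fin m → Type u) : Fin m ⊕ Fin k → Type u :=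
  Sum.elim C fun _ => PUnit.{u + 1}

instance padFam.instLinearOrder {m k : ℕ} (C : Fin m → Type u) [∀ j, LinearOrder (C j)] :
    ∀ s, LinearOrder (padFam (k := k) C s)
  | Sum.inl j => inferInstanceAs (LinearOrder (C j))
  | Sum.inr _ => inferInstanceAs (LinearOrder PUnit)

instance padFam.instNonempty {m k : ℕ} (C : Fin m → Type u) [∀ j, Nonempty (C j)] :
    ∀ s, Nonempty (padFam (k := k) C s)
  | Sum.inl j => inferInstanceAs (Nonempty (C j))
  | Sum.inr _ => inferInstanceAs (Nonempty PUnit)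

lemma zero_mem_absSet (P : Type u) [PartialOrder P] : 0 ∈ AbsSet P := by
  intro T _ _
  haveI : Unique (∀ i : Fin 0, T i) := inferInstance
  exact orderDim_eq_of_iso (orderIsoProdUnique P _)

lemma absSet_mem_of_le {P : Type u} [PartialOrder P] {m n : ℕ} (hmn : m ≤ n)
    (hn : n ∈ AbsSet P) : m ∈ AbsSet P := by
  intro C instL instN
  let e : (Fin m ⊕ Fin (n - m)) ≃ Fin n :=
    finSumFinEquiv.trans (finCongr (Nat.add_sub_cancel' hmn))
  let T : Fin n → Type u := fun i => padFam (k := n - m) C (e.symm i)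
  letI instTL : ∀ i, LinearOrder (T i) := fun i => padFam.instLinearOrder C (e.symm i)
  letI instTN : ∀ i, Nonempty (T i) := fun i => padFam.instNonempty C (e.symm i)
  have hdim := hn T
  have iso1 : (∀ i, T i) ≃o (∀ s, padFam (k := n - m) C s) :=
    (orderIsoPiCongrLeft' (padFam (k := n - m) C) e).symm
  have iso2 : (∀ s, padFam (k := n - m) C s) ≃o
      (∀ j, C j) × (∀ _ : Fin (n - m), PUnit.{u+1}) :=
    orderIsoSumPi (padFam (k := n - m) C)
  have iso3 : ((∀ j, C j) × (∀ _ : Fin (n - m), PUnit.{u+1})) ≃o (∀ j, C j) :=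
    orderIsoProdUnique _ _
  have iso : (P × ∀ i, T i) ≃o (P × ∀ j, C j) :=
    orderIsoProdCongr (OrderIso.refl P) ((iso1.trans iso2).trans iso3)
  rw [← orderDim_eq_of_iso iso]
  exact hdim

lemma mem_absSet_of_le_absorb {P : Type u} [PartialOrder P] {m : ℕ}
    (hm : m ≤ absorb P) : m ∈ AbsSet P := by
  by_cases hb : BddAbove (AbsSet P)
  · exact absSet_mem_of_le hm (Nat.sSup_mem ⟨0, zero_mem_absSet P⟩ hb)
  · have h0 : absorb P = 0 := by
      rw [absorb_eq, csSup_of_not_bddAbove hb, csSup_empty]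
      rfl
    have : m = 0 := Nat.le_zero.mp (h0 ▸ hm)
    subst this
    exact zero_mem_absSet P

/-! ### Realizers indexed by `Fin d` -/

lemma exists_fin_realizer {β : Type u} [PartialOrder β] {d : ℕ} (h : orderDim β = d) :
    ∃ r : Fin d → β → β → Prop, IsRealizer β r := by
  obtain ⟨ι, r, hr, hc⟩ := exists_realizer_orderDim β
  rw [h, Cardinal.mk_eq_nat_iff] at hc
  obtain ⟨e⟩ := hc
  refine ⟨fun j => r (e.symm j), fun j => hr.1 _, fun x y => ?_⟩
  rw [hr.2]
  exact ⟨fun h j => h _, fun h i => by simpa using h (e i)⟩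

/-- A copy of `β`, to be endowed with the linear order `r`. -/
def withLin (β : Type u) (r : β → β → Prop) : Type u := β

section embeddings
variable {α γ : Type u} [PartialOrder α] [PartialOrder γ]

def embProdLeft (c : γ) : α ↪o α × γ :=
  OrderEmbedding.ofMapLEIff (fun a => (a, c)) (by intro a b; simp [Prod.le_def])

def embProdRight (a : α) : γ ↪o α × γ :=
  OrderEmbedding.ofMapLEIff (fun c => (a, c)) (by intro c d; simp [Prod.le_def])

end embeddings

/-! ### The key absorption lemma -/

lemma dim_prod_le_of_absorb {R β : Type u} [PartialOrder R] [PartialOrder β] [Nonempty β]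
    {d k : ℕ} (hβ : orderDim β = d) (C : Fin k → Type u)
    [instCL : ∀ j, LinearOrder (C j)] [instCN : ∀ j, Nonempty (C j)]
    (hmem : k + d ∈ AbsSet R) :
    orderDim ((R × ∀ j, C j) × β) ≤ orderDim R := by
  obtain ⟨r, hr⟩ := exists_fin_realizer hβ
  let W : Fin k ⊕ Fin d → Type u := Sum.elim C (fun j => withLin β (r j))
  letI instWL : ∀ s, LinearOrder (W s) := fun s =>
    match s with
    | Sum.inl j => instCL j
    | Sum.inr j => linOfIsLin (r j) (hr.1 j)
  letI instWN : ∀ s, Nonempty (W s) := fun s =>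
    match s with
    | Sum.inl j => instCN j
    | Sum.inr _ => ‹Nonempty β›
  let e : (Fin k ⊕ Fin d) ≃ Fin (k + d) := finSumFinEquiv
  let T : Fin (k + d) → Type u := fun i => W (e.symm i)
  letI : ∀ i, LinearOrder (T i) := fun i => instWL (e.symm i)
  letI : ∀ i, Nonempty (T i) := fun i => instWN (e.symm i)
  have hdim := hmem T
  have emb : ((R × ∀ j, C j) × β) ↪o (R × ∀ i, T i) := by
    refine OrderEmbedding.ofMapLEIff
      (fun p => (p.1.1, fun i =>
        (Sum.rec (fun j => p.1.2 j) (fun _ => p.2) (e.symm i) : W (e.symm i)))) ?_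
    intro p q
    constructor
    · rintro ⟨h1, h2⟩
      have hW : ∀ s, (Sum.rec (fun j => p.1.2 j) (fun _ => p.2) s : W s) ≤
          (Sum.rec (fun j => q.1.2 j) (fun _ => q.2) s : W s) := by
        intro s
        obtain ⟨i, rfl⟩ := e.symm.surjective s
        exact h2 i
      refine ⟨⟨h1, fun j => hW (Sum.inl j)⟩, (hr.2 _ _).mpr fun j => hW (Sum.inr j)⟩
    · rintro ⟨⟨h1, hc⟩, hb⟩
      have hW : ∀ s, (Sum.rec (fun j => p.1.2 j) (fun _ => p.2) s : W s) ≤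
          (Sum.rec (fun j => q.1.2 j) (fun _ => q.2) s : W s) := by
        rintro (j | j)
        · exact hc j
        · exact (hr.2 _ _).mp hb j
      exact ⟨h1, fun i => hW (e.symm i)⟩
  exact (orderDim_le_of_embedding emb).trans (le_of_eq hdim)

/-! ### Lower bound via Boolean cubes -/

lemma natCast_le_orderDim_bool (n : ℕ) :
    (n : Cardinal.{u}) ≤ orderDim (∀ _ : Fin n, ULift.{u} Bool) := by
  apply le_csInf (nonempty_dimSet _)
  rintro κ ⟨ι, r, h1, h2, rfl⟩
  let a : Fin n → ∀ _ : Fin n, ULift.{u} Bool := fun j i => ⟨decide (i = j)⟩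
  let b : Fin n → ∀ _ : Fin n, ULift.{u} Bool := fun j i => ⟨decide (i ≠ j)⟩
  have hab : ∀ j k, j ≠ k → a j ≤ b k := by
    intro j k hjk i
    show (⟨decide (i = j)⟩ : ULift.{u} Bool) ≤ ⟨decide (i ≠ k)⟩
    by_cases h : i = j
    · subst h
      simp [hjk]
    · simp [h]
  have hnab : ∀ j, ¬ a j ≤ b j := by
    intro j h
    have h' := h j
    simp [a, b] at h'
    exact absurd h' (by decide)
  have hex : ∀ j, ∃ i, ¬ r i (a j) (b j) := by
    intro j
    by_contra hc
    push_neg at hc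
    exact hnab j ((h2 _ _).mpr hc)
  choose g hg using hex
  have hginj : Function.Injective g := by
    intro j k hjk
    by_contra hne
    haveI := h1 (g j)
    have hgk : ¬ r (g j) (a k) (b k) := by rw [hjk]; exact hg k
    have hba : r (g j) (b k) (a k) := (Std.Total.total (r := r (g j)) _ _).resolve_left hgk
    have h3 : r (g j) (a j) (b k) := (h2 _ _).mp (hab j k hne) _
    have h4 : r (g j) (a k) (b j) := (h2 _ _).mp (hab k j (Ne.symm hne)) _
    exact hg j (IsTrans.trans (r := r (g j)) _ _ _
      (IsTrans.trans (r := r (g j)) _ _ _ h3 hba) h4)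
  calc (n : Cardinal.{u}) = Cardinal.mk (ULift.{u} (Fin n)) := by simp
    _ ≤ Cardinal.mk ι :=
        Cardinal.mk_le_of_injective (f := fun x => g x.down)
          (fun x y hxy => ULift.ext _ _ (hginj hxy))

lemma bddAbove_absSet {R : Type u} [PartialOrder R] [Nonempty R] {d : ℕ}
    (hd : orderDim R = d) : BddAbove (AbsSet R) := by
  refine ⟨d, fun n hn => ?_⟩
  have h1 := hn (fun _ => ULift.{u} Bool)
  have h2 : (n : Cardinal.{u}) ≤ orderDim (∀ _ : Fin n, ULift.{u} Bool) :=
    natCast_le_orderDim_bool n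
  have h3 : orderDim (∀ _ : Fin n, ULift.{u} Bool) ≤
      orderDim (R × ∀ _ : Fin n, ULift.{u} Bool) :=
    orderDim_le_of_embedding (embProdRight (Classical.arbitrary R))
  have h4 : (n : Cardinal.{u}) ≤ (d : Cardinal.{u}) := by
    calc (n : Cardinal.{u}) ≤ _ := h2
      _ ≤ _ := h3
      _ = orderDim R := h1
      _ = d := hd
  exact_mod_cast h4

/-! ### Main theorem -/

theorem stmt14 (P Q : Type u) [PartialOrder P] [Nonempty P] [PartialOrder Q] [Nonempty Q]
    (dP dQ : ℕ) (hdP : orderDim P = dP) (hdQ : orderDim Q = dQ)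
    (habs : dQ ≤ absorb P) :
    orderDim (P × Q) = dP ∧ absorb P - dQ + absorb Q ≤ absorb (P × Q) := by
  have hQmem : dQ ∈ AbsSet P := mem_absSet_of_le_absorb habs
  -- Part 1
  have part1 : orderDim (P × Q) = dP := by
    apply le_antisymm
    · have h0 : (0 : ℕ) + dQ ∈ AbsSet P := by rw [Nat.zero_add]; exact hQmem
      have hle := dim_prod_le_of_absorb (R := P) hdQ (fun _ : Fin 0 => PUnit.{u+1}) h0
      have iso : (P × Q) ≃o ((P × ∀ _ : Fin 0, PUnit.{u+1}) × Q) :=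
        orderIsoProdCongr (orderIsoProdUnique P _).symm (OrderIso.refl Q)
      rw [orderDim_eq_of_iso iso, ← hdP]
      exact hle
    · rw [← hdP]
      exact orderDim_le_of_embedding (embProdLeft (Classical.arbitrary Q))
  refine ⟨part1, ?_⟩
  -- Part 2
  have hPmem : absorb P ∈ AbsSet P := mem_absSet_of_le_absorb le_rfl
  have hQmem' : absorb Q ∈ AbsSet Q := mem_absSet_of_le_absorb le_rfl
  have hnmem : absorb P - dQ + absorb Q ∈ AbsSet (P × Q) := by
    intro T instTL instTN
    let e : (Fin (absorb P - dQ) ⊕ Fin (absorb Q)) ≃ Fin (absorb P - dQ + absorb Q) :=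
      finSumFinEquiv
    let T1 : Fin (absorb P - dQ) → Type u := fun j => T (e (.inl j))
    let T2 : Fin (absorb Q) → Type u := fun j => T (e (.inr j))
    letI : ∀ j, LinearOrder (T1 j) := fun j => instTL _
    letI : ∀ j, LinearOrder (T2 j) := fun j => instTL _
    letI : ∀ j, Nonempty (T1 j) := fun j => instTN _
    letI : ∀ j, Nonempty (T2 j) := fun j => instTN _
    have isoA : (∀ i, T i) ≃o (∀ s, T (e s)) :=
      orderIsoPiCongrLeft' T e.symm
    have isoB : (∀ s, T (e s)) ≃o (∀ j, T1 j) × (∀ j, T2 j) :=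
      orderIsoSumPi (fun s => T (e s))
    have iso : ((P × Q) × ∀ i, T i) ≃o ((P × ∀ j, T1 j) × (Q × ∀ j, T2 j)) :=
      (orderIsoProdCongr (OrderIso.refl (P × Q)) (isoA.trans isoB)).trans
        (orderIsoPPPC P Q (∀ j, T1 j) (∀ j, T2 j))
    have h2 : orderDim (Q × ∀ j, T2 j) = dQ := by
      rw [hQmem' T2]
      exact hdQ
    have hmemP : (absorb P - dQ) + dQ ∈ AbsSet P := by
      rw [Nat.sub_add_cancel habs]
      exact hPmem
    have hle : orderDim ((P × ∀ j, T1 j) × (Q × ∀ j, T2 j)) ≤ orderDim P :=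
      dim_prod_le_of_absorb h2 T1 hmemP
    apply le_antisymm
    · rw [orderDim_eq_of_iso iso, part1]
      exact hle.trans (le_of_eq hdP)
    · exact orderDim_le_of_embedding (embProdLeft (Classical.arbitrary (∀ i, T i)))
  have hbdd : BddAbove (AbsSet (P × Q)) := bddAbove_absSet part1
  rw [absorb_eq (P × Q)]
  exact le_csSup hbdd hnmem
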